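/- Assume the polyhedral inverse-sequence setup with vertex stars (as in the UV-statement), fix k ∈ ℕ and x ∈ X, and set S_{x,i} = B_{x,i} ∩ P_i^{(l_k)}. Then for each i, g_i^{i+1}(P_{x,i+1}^{(l_k)}) ⊂ S_{x,i} ⊂ P_{x,i}^{(l_k)}, and the fiber of the restricted limit map satisfies (π|_{A_k})^{-1}(x) = lim (S_{x,i}, g_i^{i+1}) = lim (P_{x,i}^{(l_k)}, g_i^{i+1}). -/

import Mathlib

open Set Topology Filter

/-! ### General topological notions -/

/-- Covering dimension at most `n`: every open cover has an open refinement of order `≤ n + 1`. -/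
def CovDimLE (X : Type) [TopologicalSpace X] (n : ℕ) : Prop :=
  ∀ 𝒰 : Set (Set X), (∀ U ∈ 𝒰, IsOpen U) → ⋃₀ 𝒰 = Set.univ →
    ∃ 𝒱 : Set (Set X), (∀ V ∈ 𝒱, IsOpen V) ∧ ⋃₀ 𝒱 = Set.univ ∧
      (∀ V ∈ 𝒱, ∃ U ∈ 𝒰, V ⊆ U) ∧
      ∀ x : X, {V ∈ 𝒱 | x ∈ V}.Finite ∧ {V ∈ 𝒱 | x ∈ V}.ncard ≤ n + 1

/-- A nonempty compactum has trivial shape (the shape of a point) iff every map of it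
into an ANR (equivalently, into an open subset of a Euclidean space) is null-homotopic. -/
def HasTrivialShape (Y : Type) [TopologicalSpace Y] : Prop :=
  Nonempty Y ∧
  ∀ (n : ℕ) (U : Set (EuclideanSpace ℝ (Fin n))), IsOpen U →
    ∀ f : C(Y, U), f.Nullhomotopic

/-- `A` is an absolute neighborhood retract: it is metrizable, and for every closed
embedding of `A` into a metrizable space `M`, the image is a retract of some
neighborhood of it in `M`. -/
def IsANR (A : Type) [TopologicalSpace A] : Prop :=
  TopologicalSpace.MetrizableSpace A ∧
  ∀ (M : Type) [TopologicalSpace M], TopologicalSpace.MetrizableSpace M →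
    ∀ e : A → M, Topology.IsClosedEmbedding e →
      ∃ (U : Set M) (ret : U → A), IsOpen U ∧ Set.range e ⊆ U ∧ Continuous ret ∧
        ∀ (a : A) (h : e a ∈ U), ret ⟨e a, h⟩ = a

/-- Property `UV^k` for a space (to be applied to fibers of maps): for every embedding
into an ANR `A`, every neighborhood `U` of the image contains a smaller neighborhood `V`
such that every map of `S^r`, `0 ≤ r ≤ k`, into `V` is null-homotopic in `U`. -/
def HasPropertyUV (k : ℕ) (Y : Type) [TopologicalSpace Y] : Prop :=
  ∀ (A : Type) [TopologicalSpace A], IsANR A →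
    ∀ e : Y → A, Topology.IsEmbedding e →
      ∀ U : Set A, IsOpen U → Set.range e ⊆ U →
        ∃ V : Set A, IsOpen V ∧ Set.range e ⊆ V ∧ ∃ hVU : V ⊆ U,
          ∀ r : ℕ, r ≤ k →
            ∀ f : C((Metric.sphere (0 : EuclideanSpace ℝ (Fin (r + 1))) 1 : Set _), V),
              ((⟨Set.inclusion hVU, continuous_inclusion hVU⟩ : C(V, U)).comp f).Nullhomotopic

/-- `T` is an Eilenberg–MacLane space of type `K(G, n)`. -/
def IsEilenbergMacLane (G : Type) [AddCommGroup G] (n : ℕ) (T : Type) [TopologicalSpace T] :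
    Prop :=
  PathConnectedSpace T ∧
  ∀ t : T,
    (∀ m : ℕ, m ≠ n → Subsingleton (HomotopyGroup (Fin m) T t)) ∧
    Nonempty (HomotopyGroup (Fin n) T t ≃ G) ∧
    ∀ hn : 0 < n,
      letI : Nonempty (Fin n) := ⟨⟨0, hn⟩⟩
      Nonempty (HomotopyGroup (Fin n) T t ≃* Multiplicative G)

/-- A compactum has trivial reduced Čech cohomology with coefficients in `G` iff
every map of it into an Eilenberg–MacLane space `K(G, n)` (realized as an ANR)
is null-homotopic. -/
def HasTrivialCechCohomology (G : Type) [AddCommGroup G] (Y : Type) [TopologicalSpace Y] :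
    Prop :=
  ∀ (n : ℕ) (T : Type) [TopologicalSpace T], IsANR T → IsEilenbergMacLane G n T →
    ∀ f : C(Y, T), f.Nullhomotopic

/-- Cohomological dimension `dim_G Y ≤ n`: every map from a closed subset of `Y` into a
`K(G, n)` extends over `Y`. -/
def CohomDimLE (G : Type) [AddCommGroup G] (Y : Type) [TopologicalSpace Y] (n : ℕ) : Prop :=
  ∀ A : Set Y, IsClosed A →
    ∀ (T : Type) [TopologicalSpace T], IsANR T → IsEilenbergMacLane G n T →
      ∀ f : C(A, T), ∃ F : C(Y, T), ∀ a : A, F a = f a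

open Set Topology Filter

noncomputable section

/-! ### The Hilbert cube `Q = ∏_{i=1}^∞ I` realized inside `ℕ → ℝ` -/

/-- The ambient space `ℝ^∞` containing the Hilbert cube. -/
abbrev ESp : Type := ℕ → ℝ

/-- The metric `ρ(x, y) = ∑_{i=1}^∞ |x_i - y_i| / 2^i` on the Hilbert cube. -/
noncomputable def rho (x y : ESp) : ℝ := ∑' i : ℕ, |x i - y i| / 2 ^ (i + 1)

/-- The coordinate projection `p_n : Q → I^n` (followed by the identification of
`I^n` with the slice `I^n × {0} ⊆ Q`). -/
def proj (n : ℕ) (x : ESp) : ESp := fun j => if j < n then x j else 0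

/-- The Hilbert cube `Q`. -/
def HCube : Set ESp := {x | ∀ i, x i ∈ Set.Icc (0 : ℝ) 1}

/-- The slice `I^n × {0} ⊆ Q`, the canonical copy of `I^n` in `Q`. -/
def cubeSlice (n : ℕ) : Set ESp := {x ∈ HCube | ∀ j, n ≤ j → x j = 0}

/-- `P × Q_n ⊆ Q = I^n × Q_n`, for a subset `P` of the slice `I^n × {0}`. -/
def tube (P : Set ESp) (n : ℕ) : Set ESp := {x ∈ HCube | proj n x ∈ P}

/-- The data and hypotheses (i)–(vi) of the inverse-sequence setup of Lemma 3.1. -/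
structure InvSeqSetup where
  n : ℕ → ℕ
  P : ℕ → Set ESp
  δ : ℕ → ℝ
  ε : ℕ → ℝ
  /-- the bonding maps `g_i^{i+1} : P_{i+1} → P_i` -/
  g : ℕ → ESp → ESp
  P_sub : ∀ i, P i ⊆ cubeSlice (n i)
  P_cpt : ∀ i, IsCompact (P i)
  δ_pos : ∀ i, 0 < δ i
  ε_pos : ∀ i, 0 < ε i
  g_maps : ∀ i, Set.MapsTo (g i) (P (i + 1)) (P i)
  g_cont : ∀ i, ContinuousOn (g i) (P (i + 1))
  /-- (i) -/
  hyp1 : ∀ i, ∀ u ∈ HCube, ∀ v ∈ HCube,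
    rho u v ≤ ε (i + 1) → rho (proj (n i) u) (proj (n i) v) < δ i
  /-- (ii) -/
  hyp2 : ∀ i, n i < n (i + 1)
  /-- (iii) -/
  hyp3 : ∀ i, 9 / 2 ^ n i < ε i
  /-- (iv) -/
  hyp4 : ∀ i, ∀ x ∈ P (i + 1), rho (g i x) (proj (n i) x) < δ i
  /-- (v) -/
  hyp5 : ∀ i, δ i < 1 / 2 ^ (n i - 1)
  /-- (vi) -/
  hyp6 : ∀ i, tube (P (i + 1)) (n (i + 1)) ⊆ tube (P i) (n i)

namespace InvSeqSetup

/-- `X = ∩_{i=1}^∞ P_i × Q_{n_i}`. -/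
def X (S : InvSeqSetup) : Set ESp := ⋂ i, tube (S.P i) (S.n i)

/-- `Z = lim (P_i, g_i^{i+1})`: the space of threads of the inverse sequence. -/
abbrev Thread (S : InvSeqSetup) : Type :=
  {a : ℕ → ESp // (∀ i, a i ∈ S.P i) ∧ ∀ i, S.g i (a (i + 1)) = a i}

/-- `π : Z → X` is the limit map, `π(z) = lim_{i→∞} a_i` for a thread `z = (a_i)`. -/
def IsLimitMap (S : InvSeqSetup) (π : S.Thread → ESp) : Prop :=
  ∀ z : S.Thread, Filter.Tendsto (fun i => rho (z.1 i) (π z)) Filter.atTop (nhds 0)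

/-- `B_{x,i} = N̄(p_{n_i}(x), 2δ_i) ∩ P_i`. -/
def B (S : InvSeqSetup) (x : ESp) (i : ℕ) : Set ESp :=
  {y ∈ cubeSlice (S.n i) | rho y (proj (S.n i) x) ≤ 2 * S.δ i} ∩ S.P i

/-- `B^#_{x,i} = N̄(p_{n_i}(x), ε_i) ∩ P_i`. -/
def Bs (S : InvSeqSetup) (x : ESp) (i : ℕ) : Set ESp :=
  {y ∈ cubeSlice (S.n i) | rho y (proj (S.n i) x) ≤ S.ε i} ∩ S.P i

end InvSeqSetup

end

open Set Topology Geometry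

/-! ### Polyhedra, triangulations, skeleta, subdivisions, stars, collapsibility -/

variable {V : Type} [AddCommGroup V] [Module ℝ V]

/-- The subpolyhedron `|τ^{(k)}|` spanned by the `k`-skeleton of a simplicial complex. -/
def skelSet (K : Geometry.SimplicialComplex ℝ V) (k : ℕ) : Set V :=
  ⋃ s ∈ {s ∈ K.faces | s.card ≤ k + 1}, convexHull ℝ (s : Set V)

/-- `K` is a subdivision of `K'`. -/
def IsSubdivisionOf (K K' : Geometry.SimplicialComplex ℝ V) : Prop :=
  K.space = K'.space ∧
  ∀ s ∈ K.faces, ∃ t ∈ K'.faces, convexHull ℝ (s : Set V) ⊆ convexHull ℝ (t : Set V)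

/-- `K'` is the restriction of the simplicial complex `K` to the set `A`:
its faces are exactly the faces of `K` lying in `A`. -/
def RestrictsTo (K : Geometry.SimplicialComplex ℝ V) (A : Set V)
    (K' : Geometry.SimplicialComplex ℝ V) : Prop :=
  K'.faces = {s ∈ K.faces | convexHull ℝ (s : Set V) ⊆ A}

/-- An elementary collapse from `K` to `K'` through a free face `σ`. -/
def ElemCollapse (K K' : Geometry.SimplicialComplex ℝ V) : Prop :=
  ∃ σ τ : Finset V, σ ∈ K.faces ∧ τ ∈ K.faces ∧ σ ⊂ τ ∧
    (∀ ρ ∈ K.faces, σ ⊆ ρ → ρ = σ ∨ ρ = τ) ∧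
    K'.faces = K.faces \ {ρ | σ ⊆ ρ}

/-- A simplicial complex is collapsible if it collapses to a single vertex. -/
def IsCollapsible (K : Geometry.SimplicialComplex ℝ V) : Prop :=
  ∃ K' : Geometry.SimplicialComplex ℝ V,
    Relation.ReflTransGen ElemCollapse K K' ∧ ∃ v : V, K'.faces = {{v}}

/-- `g` is a simplicial map from `K` to `K'`: it sends vertices of any face of `K` into
a face of `K'` and is affine on each closed simplex of `K`. -/
def IsSimplicialMapOn (K K' : Geometry.SimplicialComplex ℝ V) (g : V → V) : Prop :=
  (∀ s ∈ K.faces, ∃ t ∈ K'.faces, g '' (s : Set V) ⊆ (t : Set V)) ∧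
  ∀ s ∈ K.faces, ∀ w : V → ℝ, (∀ v ∈ s, 0 ≤ w v) → ∑ v ∈ s, w v = 1 →
    g (∑ v ∈ s, w v • v) = ∑ v ∈ s, w v • g v

/-- The closed star of a vertex `v` in a simplicial complex `K`: the union of all closed
simplexes of `K` containing `v`. -/
def closedStar (K : Geometry.SimplicialComplex ℝ V) (v : V) : Set V :=
  ⋃ s ∈ {s ∈ K.faces | v ∈ s}, convexHull ℝ (s : Set V)

/-- The boundary `∂σ` of a simplex with vertex set `s`: the union of its proper faces. -/
def simplexBoundary (s : Finset V) : Set V :=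
  letI := Classical.decEq V
  ⋃ v ∈ s, convexHull ℝ ((s.erase v : Finset V) : Set V)

/-- The bundled inclusion map between subspaces. -/
def inclusionMap {W : Type} [TopologicalSpace W] {A B : Set W} (h : A ⊆ B) : C(A, B) :=
  ⟨Set.inclusion h, continuous_inclusion h⟩

/-- `g` is a generator of the abelian group `M` (i.e. `M = ⟨g⟩`). -/
def IsZGenerator {M : Type} [AddCommGroup M] (g : M) : Prop :=
  ∀ x : M, ∃ k : ℤ, x = k • g

/-! ### The polyhedral inverse-sequence setup -/

/-- The polyhedral inverse-sequence setup of Corollary 2.2: each `P_i` is a nonempty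
compact subpolyhedron of `I^{n_i}` with a triangulation `τ̃_i` and a subdivision `τ_i`
of mesh `< δ_i` which is collapsible on every simplex of `τ̃_i`, and the bonding maps
are simplicial from `τ_{i+1}` to `τ_i`. -/
structure PolySetup extends InvSeqSetup where
  /-- the triangulations `τ_i` of `P_i` -/
  tri : ℕ → Geometry.SimplicialComplex ℝ ESp
  /-- the coarser triangulations `τ̃_i` of `P_i` -/
  triT : ℕ → Geometry.SimplicialComplex ℝ ESp
  P_ne : ∀ i, (P i).Nonempty
  tri_space : ∀ i, (tri i).space = P i
  triT_space : ∀ i, (triT i).space = P i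
  tri_subdiv : ∀ i, IsSubdivisionOf (tri i) (triT i)
  /-- `mesh τ_i < δ_i` -/
  tri_mesh : ∀ i, ∀ s ∈ (tri i).faces, ∀ x ∈ convexHull ℝ (s : Set ESp),
    ∀ y ∈ convexHull ℝ (s : Set ESp), rho x y < δ i
  /-- `τ_i` restricted to any simplex `γ` of `τ̃_i` is collapsible -/
  tri_collapsible : ∀ i, ∀ γ ∈ (triT i).faces, ∃ K : Geometry.SimplicialComplex ℝ ESp,
    RestrictsTo (tri i) (convexHull ℝ (γ : Set ESp)) K ∧ IsCollapsible K
  /-- each `g_i^{i+1}` is simplicial from `τ_{i+1}` to `τ_i` -/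
  g_simp : ∀ i, IsSimplicialMapOn (tri (i + 1)) (tri i) (g i)

namespace PolySetup

/-- The subpolyhedron `P_i^{(k)}` of `P_i`. -/
def skelP (S : PolySetup) (i k : ℕ) : Set ESp := skelSet (S.tri i) k

/-- `A = lim (P_i^{(l)}, g_i^{i+1})`, a closed subspace of `Z`. -/
def A (S : PolySetup) (l : ℕ) : Set S.toInvSeqSetup.Thread :=
  {z | ∀ i, z.1 i ∈ S.skelP i l}

/-- A system of contractible subdivided vertex stars: for each `x ∈ X` and `i`, the
polyhedron `P_{x,i}` is the closed star of a vertex of `τ̃_i` (subdivided by `τ_i`),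
it is contractible, and `B_{x,i} ⊆ P_{x,i} ⊆ B^#_{x,i}`. -/
def IsVertexStarSystem (S : PolySetup) (star : ESp → ℕ → Set ESp) : Prop :=
  ∀ x ∈ S.toInvSeqSetup.X, ∀ i : ℕ,
    (∃ v : ESp, {v} ∈ (S.triT i).faces ∧ star x i = closedStar (S.triT i) v) ∧
    ContractibleSpace ↥(star x i) ∧
    S.toInvSeqSetup.B x i ⊆ star x i ∧ star x i ⊆ S.toInvSeqSetup.Bs x i

end PolySetup


section RhoHelpers

lemma half_pow_eq (n : ℕ) : (1/2:ℝ)^n = 1/2^n := by rw [div_pow, one_pow]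

lemma hcube_abs_le {u v : ESp} (hu : u ∈ HCube) (hv : v ∈ HCube) (j : ℕ) :
    |u j - v j| ≤ 1 := by
  have h1 := hu j; have h2 := hv j
  rw [Set.mem_Icc] at h1 h2
  rw [abs_le]; constructor <;> linarith

lemma summable_half_pow : Summable (fun j : ℕ => (1/2:ℝ)^j) :=
  summable_geometric_of_lt_one (by norm_num) (by norm_num)

lemma summable_aux {u v : ESp} (hu : u ∈ HCube) (hv : v ∈ HCube) :
    Summable (fun j => |u j - v j| / 2 ^ (j + 1)) := by
  apply Summable.of_nonneg_of_le (fun j => by positivity) _ summable_half_pow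
  intro j
  have h1 : |u j - v j| / 2^(j+1) ≤ 1 / 2^(j+1) := by
    gcongr; exact hcube_abs_le hu hv j
  refine h1.trans ?_
  rw [← half_pow_eq]
  exact pow_le_pow_of_le_one (by norm_num) (by norm_num) (Nat.le_succ j)

lemma rho_nonneg (u v : ESp) : 0 ≤ rho u v := tsum_nonneg (fun j => by positivity)

lemma rho_self (u : ESp) : rho u u = 0 := by simp [rho]

lemma rho_comm (u v : ESp) : rho u v = rho v u := by
  unfold rho; congr 1; funext j; rw [abs_sub_comm]

lemma rho_triangle {u v w : ESp} (hu : u ∈ HCube) (hv : v ∈ HCube) (hw : w ∈ HCube) :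
    rho u w ≤ rho u v + rho v w := by
  have h1 := summable_aux hu hv; have h2 := summable_aux hv hw
  rw [rho, rho, rho, ← Summable.tsum_add h1 h2]
  apply Summable.tsum_le_tsum _ (summable_aux hu hw) (h1.add h2)
  intro j
  rw [← add_div]
  gcongr
  exact abs_sub_le _ _ _

lemma proj_mem_HCube {u : ESp} (hu : u ∈ HCube) (n : ℕ) : proj n u ∈ HCube := by
  intro j; unfold proj
  split
  · exact hu j
  · exact ⟨le_refl 0, zero_le_one⟩

lemma proj_proj {m n : ℕ} (h : m ≤ n) (x : ESp) : proj m (proj n x) = proj m x := by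
  funext j; unfold proj
  split
  · rw [if_pos (by omega)]
  · rfl

lemma proj_eq_self {n : ℕ} {y : ESp} (hy : y ∈ cubeSlice n) : proj n y = y := by
  funext j; unfold proj
  split
  · rfl
  · exact (hy.2 j (by omega)).symm

lemma rho_proj_le {u : ESp} (hu : u ∈ HCube) (n : ℕ) :
    rho u (proj n u) ≤ (1/2:ℝ)^n := by
  have hsum := summable_aux hu (proj_mem_HCube hu n)
  have hg : Summable (fun j : ℕ => if j < n then (0:ℝ) else (1/2)^(j+1)) := by
    apply Summable.of_nonneg_of_le _ _ summable_half_pow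
    · intro j; split <;> positivity
    · intro j; split
      · positivity
      · exact pow_le_pow_of_le_one (by norm_num) (by norm_num) (Nat.le_succ j)
  have hle : ∀ j, |u j - proj n u j| / 2^(j+1) ≤ (if j < n then (0:ℝ) else (1/2)^(j+1)) := by
    intro j; by_cases h : j < n
    · simp [proj, h]
    · rw [if_neg h]
      unfold proj; rw [if_neg h, sub_zero, half_pow_eq]
      have h1 := hu j; rw [Set.mem_Icc] at h1
      rw [div_le_div_iff₀ (by positivity) (by positivity), one_mul]
      calc |u j| * 2^(j+1) ≤ 1 * 2^(j+1) := by
            gcongr; rw [abs_le]; constructor <;> linarith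
        _ = 2^(j+1) := by ring
  have key := Summable.tsum_le_tsum hle hsum hg
  have hval : ∑' j : ℕ, (if j < n then (0:ℝ) else (1/2)^(j+1)) = (1/2)^n := by
    rw [← Summable.sum_add_tsum_nat_add n hg]
    have h0 : ∑ i ∈ Finset.range n, (if i < n then (0:ℝ) else (1/2)^(i+1)) = 0 :=
      Finset.sum_eq_zero (fun i hi => if_pos (Finset.mem_range.mp hi))
    rw [h0, zero_add]
    have heq : (fun i : ℕ => if i + n < n then (0:ℝ) else (1/2)^(i+n+1))
        = fun i : ℕ => (1/2:ℝ)^(n+1) * (1/2)^i := by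
      funext i; rw [if_neg (by omega)]; ring
    rw [heq, tsum_mul_left, tsum_geometric_of_lt_one (by norm_num) (by norm_num)]
    rw [pow_succ]; ring
  rw [rho]; rw [hval] at key; exact key

end RhoHelpers


section MainHelpers

lemma P_mem_HCube (S : PolySetup) (i : ℕ) {y : ESp} (hy : y ∈ S.P i) : y ∈ HCube :=
  (S.P_sub i hy).1

lemma X_mem_HCube (S : InvSeqSetup) {x : ESp} (hx : x ∈ S.X) : x ∈ HCube :=
  (Set.mem_iInter.mp hx 0).1

lemma delta_le (S : InvSeqSetup) (i : ℕ) : S.δ i ≤ 2 * (1/2:ℝ)^(S.n i) := by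
  refine (le_of_lt (S.hyp5 i)).trans ?_
  rcases Nat.eq_zero_or_pos (S.n i) with h | h
  · rw [h]; norm_num
  · obtain ⟨m, hm⟩ : ∃ m, S.n i = m + 1 := ⟨S.n i - 1, by omega⟩
    rw [hm, Nat.add_sub_cancel]
    apply le_of_eq
    rw [half_pow_eq, pow_succ]
    field_simp

lemma chain_bound (S : PolySetup) (z : S.toInvSeqSetup.Thread) :
    ∀ t a : ℕ, rho (z.1 a) (z.1 (a + t)) ≤ 6 * (1/2:ℝ)^(S.n a) := by
  have hmem : ∀ m, z.1 m ∈ HCube := fun m => P_mem_HCube S m (z.2.1 m)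
  intro t
  induction t with
  | zero => intro a; rw [Nat.add_zero, rho_self]; positivity
  | succ t ih =>
    intro a
    have step : rho (z.1 a) (z.1 (a+1)) ≤ 3 * (1/2:ℝ)^(S.n a) := by
      have h4 := S.hyp4 a (z.1 (a+1)) (z.2.1 (a+1))
      rw [z.2.2 a] at h4
      have htail : rho (proj (S.n a) (z.1 (a+1))) (z.1 (a+1)) ≤ (1/2:ℝ)^(S.n a) := by
        rw [rho_comm]; exact rho_proj_le (hmem (a+1)) _
      have tri := rho_triangle (hmem a) (proj_mem_HCube (hmem (a+1)) (S.n a)) (hmem (a+1))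
      have hδ := delta_le S.toInvSeqSetup a
      linarith
    have ih' := ih (a+1)
    have hpow : (1/2:ℝ)^(S.n (a+1)) ≤ (1/2:ℝ)^(S.n a) * (1/2) := by
      rw [← pow_succ]
      exact pow_le_pow_of_le_one (by norm_num) (by norm_num) (S.hyp2 a)
    have tri2 := rho_triangle (hmem a) (hmem (a+1)) (hmem (a+1+t))
    have hidx : a + (t+1) = a + 1 + t := by omega
    rw [hidx]
    linarith

lemma key1 (S : PolySetup) (star : ESp → ℕ → Set ESp)
    (hstar : S.IsVertexStarSystem star) (lk : ℕ) {x : ESp}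
    (hx : x ∈ S.toInvSeqSetup.X) (i : ℕ) {y : ESp}
    (hy : y ∈ star x (i+1) ∩ S.skelP (i+1) lk) :
    S.g i y ∈ S.toInvSeqSetup.B x i ∩ S.skelP i lk := by
  letI := Classical.decEq ESp
  obtain ⟨hy1, hy2⟩ := hy
  have hBs := (hstar x hx (i+1)).2.2.2 hy1
  obtain ⟨⟨hyslice, hyrho⟩, hyP⟩ := hBs
  have hxH : x ∈ HCube := X_mem_HCube _ hx
  have hyH : y ∈ HCube := hyslice.1
  have hgP : S.g i y ∈ S.P i := S.g_maps i hyP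
  constructor
  · have h1 := S.hyp1 i y hyH (proj (S.n (i+1)) x) (proj_mem_HCube hxH _) hyrho
    rw [proj_proj (le_of_lt (S.hyp2 i))] at h1
    have h4 := S.hyp4 i y hyP
    have tri := rho_triangle (P_mem_HCube S i hgP) (proj_mem_HCube hyH (S.n i))
      (proj_mem_HCube hxH (S.n i))
    exact ⟨⟨S.P_sub i hgP, by linarith⟩, hgP⟩
  · simp only [PolySetup.skelP, skelSet, Set.mem_iUnion, Set.mem_setOf_eq, exists_prop] at hy2 ⊢
    obtain ⟨s, ⟨hsf, hscard⟩, hys⟩ := hy2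
    rw [Finset.convexHull_eq] at hys
    obtain ⟨w, hw0, hw1, hwc⟩ := hys
    rw [Finset.centerMass_eq_of_sum_1 _ _ hw1] at hwc
    simp only [id_eq] at hwc
    have haff := (S.g_simp i).2 s hsf w hw0 hw1
    rw [hwc] at haff
    obtain ⟨t, htf, hts⟩ := (S.g_simp i).1 s hsf
    have hsub : Finset.image (S.g i) s ⊆ t := by
      rw [← Finset.coe_subset, Finset.coe_image]; exact hts
    have hne : Finset.image (S.g i) s ≠ ∅ := by
      rw [Ne, Finset.image_eq_empty]
      intro he; exact (S.tri (i+1)).empty_notMem (he ▸ hsf)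
    have himg : Finset.image (S.g i) s ∈ (S.tri i).faces :=
      (S.tri i).down_closed htf hsub (Finset.nonempty_iff_ne_empty.mpr hne)
    refine ⟨Finset.image (S.g i) s, ⟨himg, le_trans Finset.card_image_le hscard⟩, ?_⟩
    rw [haff]
    have hmem := Finset.centerMass_mem_convexHull s hw0 (by rw [hw1]; norm_num)
      (z := S.g i) (fun v hv => Finset.mem_coe.mpr (Finset.mem_image_of_mem _ hv))
    rwa [Finset.centerMass_eq_of_sum_1 _ _ hw1] at hmem

end MainHelpers


/-- in the polyhedral inverse-sequence setup with contractible vertex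
stars, fix `k` and `x ∈ X` and set `S_{x,i} = B_{x,i} ∩ P_i^{(l_k)}`. Then
`g_i^{i+1}(P_{x,i+1}^{(l_k)}) ⊆ S_{x,i} ⊆ P_{x,i}^{(l_k)}` for each `i`, and the fiber of
`π|_{A_k}` over `x` satisfies
`(π|_{A_k})⁻¹(x) = lim (S_{x,i}, g_i^{i+1}) = lim (P_{x,i}^{(l_k)}, g_i^{i+1})`. -/
theorem statement10 (S : PolySetup) (π : S.toInvSeqSetup.Thread → ESp)
    (hπ : S.toInvSeqSetup.IsLimitMap π)
    (hπX : ∀ z : S.toInvSeqSetup.Thread, π z ∈ S.toInvSeqSetup.X) (hπc : Continuous π)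
    (star : ESp → ℕ → Set ESp) (hstar : S.IsVertexStarSystem star)
    (l : ℕ → ℕ) (hl : Monotone l) (hl1 : ∀ k, 1 ≤ l k) (k : ℕ)
    (x : ESp) (hx : x ∈ S.toInvSeqSetup.X) :
    (∀ i, (∀ y ∈ star x (i + 1) ∩ S.skelP (i + 1) (l k),
        S.g i y ∈ S.toInvSeqSetup.B x i ∩ S.skelP i (l k)) ∧
      S.toInvSeqSetup.B x i ∩ S.skelP i (l k) ⊆ star x i ∩ S.skelP i (l k)) ∧
    ({z : S.toInvSeqSetup.Thread | z ∈ S.A (l k) ∧ π z = x} =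
      {z : S.toInvSeqSetup.Thread |
        ∀ i, z.1 i ∈ S.toInvSeqSetup.B x i ∩ S.skelP i (l k)}) ∧
    ({z : S.toInvSeqSetup.Thread |
        ∀ i, z.1 i ∈ S.toInvSeqSetup.B x i ∩ S.skelP i (l k)} =
      {z : S.toInvSeqSetup.Thread | ∀ i, z.1 i ∈ star x i ∩ S.skelP i (l k)}) := by
  have claim1 : ∀ i, (∀ y ∈ star x (i + 1) ∩ S.skelP (i + 1) (l k),
        S.g i y ∈ S.toInvSeqSetup.B x i ∩ S.skelP i (l k)) ∧
      S.toInvSeqSetup.B x i ∩ S.skelP i (l k) ⊆ star x i ∩ S.skelP i (l k) := by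
    intro i
    exact ⟨fun y hy => key1 S star hstar (l k) hx i hy,
      fun y hy => ⟨(hstar x hx i).2.2.1 hy.1, hy.2⟩⟩
  refine ⟨claim1, ?_, ?_⟩
  · have hxH : x ∈ HCube := X_mem_HCube _ hx
    ext z
    have hmem : ∀ m, z.1 m ∈ HCube := fun m => P_mem_HCube S m (z.2.1 m)
    simp only [Set.mem_setOf_eq, PolySetup.A]
    constructor
    · rintro ⟨hzA, hzx⟩ i
      refine ⟨?_, hzA i⟩
      have hlim : ∀ m : ℕ, rho (z.1 (i+1)) x
          ≤ 6*(1/2:ℝ)^(S.n (i+1)) + rho (z.1 ((i+1)+m)) x := by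
        intro m
        have tri := rho_triangle (hmem (i+1)) (hmem ((i+1)+m)) hxH
        have hc := chain_bound S z m (i+1)
        linarith
      have htend : Filter.Tendsto (fun m : ℕ => 6*(1/2:ℝ)^(S.n (i+1)) + rho (z.1 ((i+1)+m)) x)
          Filter.atTop (nhds (6*(1/2:ℝ)^(S.n (i+1)) + 0)) := by
        apply Filter.Tendsto.const_add
        have h := (hπ z).comp (tendsto_add_atTop_nat (i+1))
        rw [hzx] at h
        exact h.congr (fun m => by
          show rho (z.1 (m+(i+1))) x = _
          rw [Nat.add_comm])
      have hle : rho (z.1 (i+1)) x ≤ 6*(1/2:ℝ)^(S.n (i+1)) := by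
        have h := ge_of_tendsto' htend hlim
        simpa using h
      have hε : rho (z.1 (i+1)) x ≤ S.ε (i+1) := by
        refine hle.trans (le_of_lt (lt_of_le_of_lt ?_ (S.hyp3 (i+1))))
        rw [half_pow_eq, mul_one_div]
        gcongr
        norm_num
      have h1 := S.hyp1 i (z.1 (i+1)) (hmem (i+1)) x hxH hε
      have h4 := S.hyp4 i (z.1 (i+1)) (z.2.1 (i+1))
      rw [z.2.2 i] at h4
      have tri := rho_triangle (hmem i) (proj_mem_HCube (hmem (i+1)) (S.n i))
        (proj_mem_HCube hxH (S.n i))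
      exact ⟨⟨S.P_sub i (z.2.1 i), by linarith⟩, z.2.1 i⟩
    · intro hz
      refine ⟨fun i => (hz i).2, ?_⟩
      have hpH : π z ∈ HCube := X_mem_HCube _ (hπX z)
      have hn_ge : ∀ i : ℕ, i ≤ S.n i := fun i => (strictMono_nat_of_lt_succ S.hyp2).le_apply
      have key : ∀ i : ℕ, rho (π z) x ≤ rho (z.1 i) (π z) + 6*(1/2:ℝ)^i := by
        intro i
        have hBr : rho (z.1 i) (proj (S.n i) x) ≤ 2 * S.δ i := (hz i).1.1.2
        have tri1 := rho_triangle hpH (hmem i) hxH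
        have tri2 := rho_triangle (hmem i) (proj_mem_HCube hxH (S.n i)) hxH
        have hpr : rho (proj (S.n i) x) x ≤ (1/2:ℝ)^(S.n i) := by
          rw [rho_comm]; exact rho_proj_le hxH _
        have hδ := delta_le S.toInvSeqSetup i
        have hpow : (1/2:ℝ)^(S.n i) ≤ (1/2:ℝ)^i :=
          pow_le_pow_of_le_one (by norm_num) (by norm_num) (hn_ge i)
        have hc := rho_comm (π z) (z.1 i)
        have hp1 : (0:ℝ) ≤ (1/2:ℝ)^i := by positivity
        have hp2 : (0:ℝ) ≤ (1/2:ℝ)^(S.n i) := by positivity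
        linarith
      have htend : Filter.Tendsto (fun i : ℕ => rho (z.1 i) (π z) + 6*(1/2:ℝ)^i)
          Filter.atTop (nhds (0 + 0)) := by
        refine (hπ z).add ?_
        have h := (tendsto_pow_atTop_nhds_zero_of_lt_one
          (by norm_num : (0:ℝ) ≤ 1/2) (by norm_num : (1/2:ℝ) < 1)).const_mul (6:ℝ)
        simpa using h
      have h0 : rho (π z) x ≤ 0 := by
        have h := ge_of_tendsto' htend key
        simpa using h
      have h0' : rho (π z) x = 0 := le_antisymm h0 (rho_nonneg _ _)
      funext j
      have hs := summable_aux hpH hxH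
      have hterm := Summable.le_tsum hs j (fun m _ => by positivity)
      rw [rho] at h0'
      rw [h0'] at hterm
      have hterm' : |π z j - x j| / 2^(j+1) = 0 :=
        le_antisymm hterm (by positivity)
      rw [div_eq_zero_iff] at hterm'
      rcases hterm' with h | h
      · exact sub_eq_zero.mp (abs_eq_zero.mp h)
      · exact absurd h (by positivity)
  · ext z
    simp only [Set.mem_setOf_eq]
    constructor
    · intro hz i; exact ⟨(hstar x hx i).2.2.1 (hz i).1, (hz i).2⟩
    · intro hz i
      have h := key1 S star hstar (l k) hx i (hz (i+1))
      rwa [z.2.2 i] at h
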